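/- arXiv:1608.03165 — 6 statements merged into one kernel-verified Lean document; each statement's English description precedes it below -/
import Mathlib

section
/- (Weak duality for the joint source-channel coding LP.) Let $\mathcal{S}, \mathcal{X}, \mathcal{Y}, \widehat{\mathcal{S}}$ be finite sets, $P_S$ a probability distribution on $\mathcal{S}$, $P_{Y|X}$ a stochastic kernel, and $\kappa : \mathcal{S}\times\mathcal{X}\times\mathcal{Y}\times\widehat{\mathcal{S}} \to \mathbb{R}$. Suppose $\gamma^a : \mathcal{S} \to \mathbb{R}$, $\gamma^b : \mathcal{Y} \to \mathbb{R}$, $\lambda^a : \mathcal{S}\times\widehat{\mathcal{S}}\times\mathcal{Y} \to \mathbb{R}$, $\lambda^b : \mathcal{X}\times\mathcal{S}\times\mathcal{Y} \to \mathbb{R}$ satisfy: (D1) $\gamma^a(s) \le \sum_y \lambda^b(x,s,y)$ for all $x,s$; (D2) $\gamma^b(y) \le \sum_s \lambda^a(s,\widehat{s},y)$ for all $\widehat{s},y$; (D3) $\lambda^a(s,\widehat{s},y) + \lambda^b(x,s,y) \le \kappa(s,x,y,\widehat{s}) P_S(s) P_{Y|X}(y|x)$ for all $s,x,y,\widehat{s}$.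 Then for every pair of functions $f : \mathcal{S} \to \mathcal{X}$, $g : \mathcal{Y} \to \widehat{\mathcal{S}}$, $$\sum_{s,y} \kappa(s, f(s), y, g(y)) P_S(s) P_{Y|X}(y|f(s)) \ge \sum_s \gamma^a(s) + \sum_y \gamma^b(y).$$ -/
open Finset

theorem lp_weak_duality
    {S X Y Sh : Type*} [Fintype S] [Fintype X] [Fintype Y] [Fintype Sh]
    (PS : S → ℝ) (hPS : ∀ s, 0 ≤ PS s) (hPS1 : ∑ s, PS s = 1)
    (PYX : X → Y → ℝ) (hPYX : ∀ x y, 0 ≤ PYX x y) (hPYX1 : ∀ x, ∑ y, PYX x y = 1)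
    (κ : S → X → Y → Sh → ℝ)
    (γa : S → ℝ) (γb : Y → ℝ) (la : S → Sh → Y → ℝ) (lb : X → S → Y → ℝ)
    (hD1 : ∀ x s, γa s ≤ ∑ y, lb x s y)
    (hD2 : ∀ sh y, γb y ≤ ∑ s, la s sh y)
    (hD3 : ∀ s x y sh, la s sh y + lb x s y ≤ κ s x y sh * PS s * PYX x y) :
    ∀ (f : S → X) (g : Y → Sh),
      (∑ s, ∑ y, κ s (f s) y (g y) * PS s * PYX (f s) y) ≥
        (∑ s, γa s) + ∑ y, γb y := by
  intro f g
  have h1 : (∑ s, γa s) + ∑ y, γb y ≤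
      ∑ s, ∑ y, (la s (g y) y + lb (f s) s y) := by
    have ha : ∑ s, γa s ≤ ∑ s, ∑ y, lb (f s) s y :=
      Finset.sum_le_sum fun s _ => hD1 (f s) s
    have hb : ∑ y, γb y ≤ ∑ y, ∑ s, la s (g y) y :=
      Finset.sum_le_sum fun y _ => hD2 (g y) y
    calc (∑ s, γa s) + ∑ y, γb y
        ≤ (∑ s, ∑ y, lb (f s) s y) + ∑ y, ∑ s, la s (g y) y := add_le_add ha hb
      _ = ∑ s, ∑ y, (la s (g y) y + lb (f s) s y) := by
          rw [Finset.sum_comm (f := fun y s => la s (g y) y), ← Finset.sum_add_distrib]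
          simp [Finset.sum_add_distrib, add_comm]
  refine le_trans h1 (Finset.sum_le_sum fun s _ => Finset.sum_le_sum fun y _ => ?_)
  exact hD3 s (f s) y (g y)
end

section
/- (Strong converse for the BSC via the LP dual bound.) Fix $0 < \epsilon < 1/2$ and $R > 1 - H_2(\epsilon)$ where $H_2(\epsilon) = -\epsilon\log_2\epsilon - (1-\epsilon)\log_2(1-\epsilon)$. For each $n$, let $M_n = \lceil 2^{nR} \rceil$ and consider the memoryless BSC of blocklength $n$ with crossover probability $\epsilon$, uniform source on $\{1,\dots,M_n\}$. Let $P_e(n)$ denote the infimum over all encoder/decoder pairs $(f,g)$ of the error probability $\Pr[S \ne g(Y)]$. Then $\lim_{n \to \infty} P_e(n) = 1$. -/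
open Finset

lemma hamming_count (n : ℕ) (x : Fin n → Bool) (F : ℕ → ℝ) :
    ∑ y : Fin n → Bool, F (hammingDist x y)
      = ∑ k ∈ range (n+1), (n.choose k : ℝ) * F k := by
  have h1 : ∑ y : Fin n → Bool, F (hammingDist x y)
      = ∑ s ∈ (univ : Finset (Fin n)).powerset, F #s := by
    refine Finset.sum_nbij' (fun y => ({i | x i ≠ y i} : Finset (Fin n)))
      (fun s => fun i => if i ∈ s then !(x i) else x i) ?_ ?_ ?_ ?_ ?_
    · intro y _; simp
    · intro s _; simp
    · intro y _
      funext i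
      cases hx : x i <;> cases hy : y i <;> simp [hx, hy]
    · intro s _
      ext i
      by_cases h : i ∈ s
      · cases hx : x i <;> simp [h, hx]
      · cases hx : x i <;> simp [h, hx]
    · intro y _
      rfl
  rw [h1, Finset.sum_powerset_apply_card]
  simp [card_univ, mul_comm]

lemma binom_eval (n : ℕ) (p : ℝ) :
    ∑ k ∈ range (n+1), (n.choose k : ℝ) * (p ^ k * (1-p) ^ (n-k)) = 1 := by
  have h := congrArg (Polynomial.eval p) (bernsteinPolynomial.sum ℝ n)
  simpa [bernsteinPolynomial, Polynomial.eval_finset_sum, mul_assoc] using h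

lemma variance_eval (n : ℕ) (p : ℝ) :
    ∑ k ∈ range (n+1), ((n:ℝ)*p - k)^2 * ((n.choose k : ℝ) * (p ^ k * (1-p) ^ (n-k)))
      = n * (p * (1-p)) := by
  have h := congrArg (Polynomial.eval p) (bernsteinPolynomial.variance ℝ n)
  simpa [bernsteinPolynomial, Polynomial.eval_finset_sum, mul_assoc, mul_comm, mul_left_comm]
    using h

lemma code_bound (n M₀ : ℕ) (hn : 0 < n) (hM0 : 0 < M₀) (ε δ : ℝ)
    (hε0 : 0 < ε) (hε : ε < 1/2) (hδ0 : 0 < δ) (hδε : δ ≤ ε)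
    (f : Fin M₀ → (Fin n → Bool)) (g : (Fin n → Bool) → Fin M₀) :
    1 - (n:ℝ)*(ε*(1-ε))/((n:ℝ)*δ)^2
      - ((1-ε)^n * (ε/(1-ε)) ^ ((n:ℝ)*(ε-δ)) * 2^n / M₀)
      ≤ (1 / (M₀ : ℝ)) * ∑ s : Fin M₀, ∑ y : Fin n → Bool,
          (if g y ≠ s then ε ^ (hammingDist (f s) y) * (1 - ε) ^ (n - hammingDist (f s) y) else 0)
    ∧ (1 / (M₀ : ℝ)) * ∑ s : Fin M₀, ∑ y : Fin n → Bool,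
          (if g y ≠ s then ε ^ (hammingDist (f s) y) * (1 - ε) ^ (n - hammingDist (f s) y) else 0)
        ≤ 1 := by
  have h1ε : (0:ℝ) < 1 - ε := by linarith
  have hq0 : (0:ℝ) < ε / (1-ε) := div_pos hε0 h1ε
  have hq1 : ε / (1-ε) ≤ 1 := by rw [div_le_one h1ε]; linarith
  have hMR : (0:ℝ) < (M₀:ℝ) := by exact_mod_cast hM0
  set P : Fin M₀ → (Fin n → Bool) → ℝ :=
    fun s y => ε ^ (hammingDist (f s) y) * (1 - ε) ^ (n - hammingDist (f s) y) with hP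
  have hPnn : ∀ s y, 0 ≤ P s y := fun s y =>
    mul_nonneg (pow_nonneg hε0.le _) (pow_nonneg h1ε.le _)
  set T : ℝ := (1-ε)^n * (ε/(1-ε)) ^ ((n:ℝ)*(ε-δ)) with hT
  have hTnn : 0 ≤ T := mul_nonneg (pow_nonneg h1ε.le _) (Real.rpow_nonneg hq0.le _)
  -- total probability one
  have hsum1 : ∀ s : Fin M₀, ∑ y : Fin n → Bool, P s y = 1 := by
    intro s
    rw [hP]
    rw [hamming_count n (f s) (fun k => ε^k * (1-ε)^(n-k))]
    exact binom_eval n ε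
  -- rewrite error as 1 - success
  have hsplit : ∀ s : Fin M₀, ∑ y : Fin n → Bool, (if g y ≠ s then P s y else 0)
      = 1 - ∑ y : Fin n → Bool, (if g y = s then P s y else 0) := by
    intro s
    rw [← hsum1 s, ← Finset.sum_sub_distrib]
    refine Finset.sum_congr rfl fun y _ => ?_
    by_cases h : g y = s <;> simp [h]
  have herr : (1 / (M₀ : ℝ)) * ∑ s : Fin M₀, ∑ y : Fin n → Bool, (if g y ≠ s then P s y else 0)
      = 1 - (1 / (M₀ : ℝ)) * ∑ s : Fin M₀, ∑ y : Fin n → Bool, (if g y = s then P s y else 0) := by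
    simp only [hsplit]
    rw [Finset.sum_sub_distrib, Finset.sum_const, card_univ, Fintype.card_fin]
    field_simp
    rw [nsmul_eq_mul, mul_one]
  -- success per-codeword bound
  have hfac : ∀ d : ℕ, d ≤ n → ε ^ d * (1-ε)^(n-d) = (1-ε)^n * (ε/(1-ε)) ^ d := by
    intro d hdn
    have h2 : (1-ε)^n = (1-ε)^(n-d) * (1-ε)^d := by rw [← pow_add]; congr 1; omega
    rw [h2, div_pow]
    field_simp
  have hPle : ∀ s y, (n:ℝ)*(ε-δ) ≤ (hammingDist (f s) y : ℝ) → P s y ≤ T := by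
    intro s y hd
    have hdn : hammingDist (f s) y ≤ n := by
      simpa using (hammingDist_le_card_fintype (x := f s) (y := y))
    show ε ^ (hammingDist (f s) y) * (1 - ε) ^ (n - hammingDist (f s) y) ≤ T
    set d := hammingDist (f s) y
    rw [hfac d hdn, hT]
    refine mul_le_mul_of_nonneg_left ?_ (pow_nonneg h1ε.le _)
    rw [← Real.rpow_natCast (ε/(1-ε)) d]
    exact Real.rpow_le_rpow_of_exponent_ge hq0 hq1 hd
  have hpoint : ∀ s y, (if g y = s then P s y else 0)
      ≤ (if (hammingDist (f s) y : ℝ) < (n:ℝ)*(ε-δ) then P s y else 0)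
        + (if g y = s then T else 0) := by
    intro s y
    by_cases h : g y = s
    · by_cases h2 : (hammingDist (f s) y : ℝ) < (n:ℝ)*(ε-δ)
      · simp only [h, h2, if_true]
        linarith [hTnn, hPnn s y]
      · simp only [h, h2, if_true, if_false, zero_add]
        exact hPle s y (not_lt.mp h2)
    · simp only [h, if_false]
      positivity
  -- tail (Chebyshev) bound
  have htail : ∀ s : Fin M₀,
      ∑ y : Fin n → Bool, (if (hammingDist (f s) y : ℝ) < (n:ℝ)*(ε-δ) then P s y else 0)
        ≤ (n:ℝ)*(ε*(1-ε))/((n:ℝ)*δ)^2 := by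
    intro s
    have hcount := hamming_count n (f s)
      (fun k => if (k:ℝ) < (n:ℝ)*(ε-δ) then ε^k * (1-ε)^(n-k) else 0)
    simp only [hP]
    rw [hcount]
    have hnd : (0:ℝ) < (n:ℝ)*δ := by
      have : (0:ℝ) < (n:ℝ) := by exact_mod_cast hn
      positivity
    have hstep : ∀ k ∈ range (n+1),
        (n.choose k : ℝ) * (if (k:ℝ) < (n:ℝ)*(ε-δ) then ε^k * (1-ε)^(n-k) else 0)
          ≤ (((n:ℝ)*ε - k)^2 / ((n:ℝ)*δ)^2) * ((n.choose k : ℝ) * (ε^k * (1-ε)^(n-k))) := by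
      intro k _
      by_cases h : (k:ℝ) < (n:ℝ)*(ε-δ)
      · rw [if_pos h]
        have hle : ((n:ℝ)*δ)^2 ≤ ((n:ℝ)*ε - k)^2 := by
          apply pow_le_pow_left₀ hnd.le
          nlinarith
        refine le_mul_of_one_le_left ?_ ?_
        · positivity
        · rw [le_div_iff₀ (by positivity)]
          linarith
      · rw [if_neg h, mul_zero]
        positivity
    calc ∑ k ∈ range (n+1), (n.choose k : ℝ) *
            (if (k:ℝ) < (n:ℝ)*(ε-δ) then ε^k * (1-ε)^(n-k) else 0)
        ≤ ∑ k ∈ range (n+1),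
            (((n:ℝ)*ε - k)^2 / ((n:ℝ)*δ)^2) * ((n.choose k : ℝ) * (ε^k * (1-ε)^(n-k))) :=
          Finset.sum_le_sum hstep
      _ = (1/((n:ℝ)*δ)^2) * ∑ k ∈ range (n+1),
            ((n:ℝ)*ε - k)^2 * ((n.choose k : ℝ) * (ε^k * (1-ε)^(n-k))) := by
          rw [Finset.mul_sum]; refine Finset.sum_congr rfl fun k _ => by ring
      _ = (n:ℝ)*(ε*(1-ε))/((n:ℝ)*δ)^2 := by
          rw [variance_eval n ε]; ring
  -- fibers count
  have hfib : ∑ s : Fin M₀, (({y : Fin n → Bool | g y = s} : Finset _).card : ℝ) = 2^n := by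
    have h := Finset.card_eq_sum_card_fiberwise
      (f := g) (s := (univ : Finset (Fin n → Bool))) (t := (univ : Finset (Fin M₀)))
      (fun x _ => mem_univ _)
    have h2 : (univ : Finset (Fin n → Bool)).card = 2^n := by
      simp [card_univ]
    have h3 : ∑ s : Fin M₀, (filter (fun y => g y = s) univ).card = 2^n := by
      rw [← h]; exact h2
    exact_mod_cast h3
  have hdecT : ∀ s : Fin M₀, ∑ y : Fin n → Bool, (if g y = s then T else 0)
      = (({y : Fin n → Bool | g y = s} : Finset _).card : ℝ) * T := by
    intro s
    rw [← Finset.sum_filter, Finset.sum_const, nsmul_eq_mul]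
  -- success total bound
  have hsucc : (1 / (M₀ : ℝ)) * ∑ s : Fin M₀, ∑ y : Fin n → Bool, (if g y = s then P s y else 0)
      ≤ (n:ℝ)*(ε*(1-ε))/((n:ℝ)*δ)^2 + T * 2^n / M₀ := by
    have hb : ∑ s : Fin M₀, ∑ y : Fin n → Bool, (if g y = s then P s y else 0)
        ≤ ∑ s : Fin M₀, ((n:ℝ)*(ε*(1-ε))/((n:ℝ)*δ)^2
            + (({y : Fin n → Bool | g y = s} : Finset _).card : ℝ) * T) := by
      refine Finset.sum_le_sum fun s _ => ?_
      calc ∑ y : Fin n → Bool, (if g y = s then P s y else 0)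
          ≤ ∑ y : Fin n → Bool,
              ((if (hammingDist (f s) y : ℝ) < (n:ℝ)*(ε-δ) then P s y else 0)
                + (if g y = s then T else 0)) := Finset.sum_le_sum fun y _ => hpoint s y
        _ = (∑ y : Fin n → Bool, (if (hammingDist (f s) y : ℝ) < (n:ℝ)*(ε-δ) then P s y else 0))
            + ∑ y : Fin n → Bool, (if g y = s then T else 0) := Finset.sum_add_distrib
        _ ≤ (n:ℝ)*(ε*(1-ε))/((n:ℝ)*δ)^2
            + (({y : Fin n → Bool | g y = s} : Finset _).card : ℝ) * T := by
            rw [hdecT s]; exact add_le_add (htail s) le_rfl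
    calc (1 / (M₀ : ℝ)) * ∑ s : Fin M₀, ∑ y : Fin n → Bool, (if g y = s then P s y else 0)
        ≤ (1 / (M₀ : ℝ)) * ∑ s : Fin M₀, ((n:ℝ)*(ε*(1-ε))/((n:ℝ)*δ)^2
            + (({y : Fin n → Bool | g y = s} : Finset _).card : ℝ) * T) := by
          apply mul_le_mul_of_nonneg_left hb (by positivity)
      _ = (n:ℝ)*(ε*(1-ε))/((n:ℝ)*δ)^2 + T * 2^n / M₀ := by
          rw [Finset.sum_add_distrib, Finset.sum_const, ← Finset.sum_mul, hfib,
            card_univ, Fintype.card_fin]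
          have hn0 : (n:ℝ) ≠ 0 := by exact_mod_cast hn.ne'
          have hδ0' : δ ≠ 0 := hδ0.ne'
          rw [nsmul_eq_mul]
          field_simp
  have hsuccnn : 0 ≤ (1 / (M₀ : ℝ)) * ∑ s : Fin M₀, ∑ y : Fin n → Bool,
      (if g y = s then P s y else 0) := by
    apply mul_nonneg (by positivity)
    apply Finset.sum_nonneg; intro s _
    apply Finset.sum_nonneg; intro y _
    by_cases h : g y = s <;> simp [h, hPnn s y]
  constructor
  · rw [herr]
    have : T * 2^n / M₀ = (1-ε)^n * (ε/(1-ε)) ^ ((n:ℝ)*(ε-δ)) * 2^n / M₀ := by rw [hT]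
    linarith [hsucc, this]
  · rw [herr]
    linarith [hsuccnn]

theorem bsc_strong_converse (ε R : ℝ) (hε0 : 0 < ε) (hε : ε < 1/2)
    (hR : R > 1 - (-(ε * Real.logb 2 ε) - (1 - ε) * Real.logb 2 (1 - ε)))
    (M : ℕ → ℕ) (hM : ∀ n, M n = ⌈(2:ℝ) ^ ((n : ℝ) * R)⌉₊)
    (Pe : ℕ → ℝ)
    (hPe : ∀ n, Pe n = sInf { e : ℝ |
      ∃ (f : Fin (M n) → (Fin n → Bool)) (g : (Fin n → Bool) → Fin (M n)),
        e = (1 / (M n : ℝ)) * ∑ s : Fin (M n), ∑ y : Fin n → Bool,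
          (if g y ≠ s then
            ε ^ (hammingDist (f s) y) * (1 - ε) ^ (n - hammingDist (f s) y)
          else 0) }) :
    Filter.Tendsto Pe Filter.atTop (nhds 1) := by
  have h1ε : (0:ℝ) < 1 - ε := by linarith
  have hεe : ε < 1 - ε := by linarith
  have hq0 : (0:ℝ) < ε / (1-ε) := div_pos hε0 h1ε
  set H : ℝ := -(ε * Real.logb 2 ε) - (1 - ε) * Real.logb 2 (1 - ε) with hH
  set c : ℝ := Real.logb 2 (1-ε) - Real.logb 2 ε with hc
  have hc0 : 0 < c := by
    have := Real.logb_lt_logb (b := 2) one_lt_two hε0 hεe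
    linarith
  have hκ : 0 < R - (1 - H) := by linarith
  set δ : ℝ := min (ε/2) ((R - (1 - H))/(2*c)) with hδ
  have hδ0 : 0 < δ := lt_min (by linarith) (by positivity)
  have hδε : δ ≤ ε := le_trans (min_le_left _ _) (by linarith)
  have hδc : δ * c ≤ (R - (1 - H))/2 := by
    have h1 : δ ≤ (R - (1 - H))/(2*c) := min_le_right _ _
    calc δ * c ≤ (R - (1 - H))/(2*c) * c := mul_le_mul_of_nonneg_right h1 hc0.le
    _ = (R - (1-H))/2 := by field_simp
  set r : ℝ := 2 * (1-ε) * (ε/(1-ε)) ^ (ε - δ) / (2:ℝ) ^ R with hr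
  have hr0 : 0 < r := by
    apply div_pos
    · have := Real.rpow_pos_of_pos hq0 (ε - δ)
      nlinarith
    · exact Real.rpow_pos_of_pos two_pos R
  clear_value H c δ r
  have hr1 : r < 1 := by
    have e1 : Real.logb 2 ((ε/(1-ε)) ^ (ε - δ)) = (ε - δ) * (Real.logb 2 ε - Real.logb 2 (1-ε)) := by
      unfold Real.logb
      rw [Real.log_rpow hq0, Real.log_div hε0.ne' h1ε.ne']
      ring
    have e2 : Real.logb 2 ((2:ℝ) ^ R) = R := by
      unfold Real.logb
      rw [Real.log_rpow two_pos]
      have h2 : Real.log 2 ≠ 0 := (Real.log_pos one_lt_two).ne'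
      field_simp
    have hlogb : Real.logb 2 r = 1 - H - R + δ * c := by
      rw [hr, Real.logb_div (by positivity) (Real.rpow_pos_of_pos two_pos R).ne',
        Real.logb_mul (by positivity) (Real.rpow_pos_of_pos hq0 _).ne',
        Real.logb_mul (by norm_num) h1ε.ne', e1, e2, Real.logb_self_eq_one one_lt_two]
      rw [hH, hc]
      ring
    have : Real.logb 2 r < 0 := by rw [hlogb]; linarith
    exact (Real.logb_neg_iff one_lt_two hr0).mp this
  have hM0 : ∀ n, 0 < M n := by
    intro n
    rw [hM n]
    exact Nat.ceil_pos.mpr (Real.rpow_pos_of_pos two_pos _)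
  have hMlb : ∀ n : ℕ, (2:ℝ) ^ ((n:ℝ)*R) ≤ (M n : ℝ) := by
    intro n
    rw [hM n]
    exact Nat.le_ceil _
  -- the ratio bound
  have hratio : ∀ n : ℕ,
      (1-ε)^n * (ε/(1-ε)) ^ ((n:ℝ)*(ε-δ)) * 2^n / (M n) ≤ r^n := by
    intro n
    have hnum : (1-ε)^n * (ε/(1-ε)) ^ ((n:ℝ)*(ε-δ)) * 2^n
        = (2 * (1-ε) * (ε/(1-ε)) ^ (ε-δ))^n := by
      have hq : (ε/(1-ε)) ^ ((n:ℝ)*(ε-δ)) = ((ε/(1-ε)) ^ (ε-δ))^n := by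
        rw [← Real.rpow_natCast ((ε/(1-ε)) ^ (ε-δ)) n, ← Real.rpow_mul hq0.le]
        ring_nf
      rw [hq, mul_pow, mul_pow]
      ring
    have hden : (2:ℝ) ^ ((n:ℝ)*R) = ((2:ℝ) ^ R)^n := by
      rw [← Real.rpow_natCast ((2:ℝ) ^ R) n, ← Real.rpow_mul (by norm_num)]
      ring_nf
    have hnn : 0 ≤ (1-ε)^n * (ε/(1-ε)) ^ ((n:ℝ)*(ε-δ)) * 2^n := by positivity
    calc (1-ε)^n * (ε/(1-ε)) ^ ((n:ℝ)*(ε-δ)) * 2^n / (M n)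
        ≤ (1-ε)^n * (ε/(1-ε)) ^ ((n:ℝ)*(ε-δ)) * 2^n / ((2:ℝ) ^ ((n:ℝ)*R)) := by
          apply div_le_div_of_nonneg_left hnn (Real.rpow_pos_of_pos two_pos _) (hMlb n)
      _ = r^n := by
          rw [hnum, hden, hr, div_pow]
  -- bounds on Pe
  have hbounds : ∀ n : ℕ, 0 < n →
      1 - (n:ℝ)*(ε*(1-ε))/((n:ℝ)*δ)^2 - r^n ≤ Pe n ∧ Pe n ≤ 1 := by
    intro n hn
    set S := { e : ℝ |
      ∃ (f : Fin (M n) → (Fin n → Bool)) (g : (Fin n → Bool) → Fin (M n)),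
        e = (1 / (M n : ℝ)) * ∑ s : Fin (M n), ∑ y : Fin n → Bool,
          (if g y ≠ s then
            ε ^ (hammingDist (f s) y) * (1 - ε) ^ (n - hammingDist (f s) y)
          else 0) } with hS
    have hlb : ∀ e ∈ S, 1 - (n:ℝ)*(ε*(1-ε))/((n:ℝ)*δ)^2 - r^n ≤ e := by
      rintro e ⟨f, g, rfl⟩
      have h := (code_bound n (M n) hn (hM0 n) ε δ hε0 hε hδ0 hδε f g).1
      have := hratio n
      linarith
    have hne : S.Nonempty := by
      refine ⟨_, (fun _ _ => false), (fun _ => ⟨0, hM0 n⟩), rfl⟩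
    constructor
    · rw [hPe n]
      exact le_csInf hne hlb
    · rw [hPe n]
      obtain ⟨e, f, g, he⟩ := hne
      have h2 := (code_bound n (M n) hn (hM0 n) ε δ hε0 hε hδ0 hδε f g).2
      calc sInf S ≤ e := csInf_le ⟨_, hlb⟩ ⟨f, g, he⟩
        _ ≤ 1 := by rw [he]; exact h2
  -- limits
  have t1 : Filter.Tendsto (fun n : ℕ => (n:ℝ)*(ε*(1-ε))/((n:ℝ)*δ)^2)
      Filter.atTop (nhds 0) := by
    have heq : ∀ᶠ n : ℕ in Filter.atTop,
        (ε*(1-ε)/δ^2) * (1/(n:ℝ)) = (n:ℝ)*(ε*(1-ε))/((n:ℝ)*δ)^2 := by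
      filter_upwards [Filter.eventually_ge_atTop 1] with n hn
      have hn0 : (n:ℝ) ≠ 0 := by positivity
      field_simp
    refine Filter.Tendsto.congr' heq ?_
    have := tendsto_one_div_atTop_nhds_zero_nat.const_mul (ε*(1-ε)/δ^2)
    simpa using this
  have t2 : Filter.Tendsto (fun n : ℕ => r^n) Filter.atTop (nhds 0) :=
    tendsto_pow_atTop_nhds_zero_of_lt_one hr0.le hr1
  have tg : Filter.Tendsto (fun n : ℕ => 1 - (n:ℝ)*(ε*(1-ε))/((n:ℝ)*δ)^2 - r^n)
      Filter.atTop (nhds 1) := by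
    have := (tendsto_const_nhds (x := (1:ℝ)) (f := Filter.atTop (α := ℕ))).sub t1 |>.sub t2
    simpa using this
  refine tendsto_of_tendsto_of_tendsto_of_le_of_le' tg tendsto_const_nhds ?_ ?_
  · filter_upwards [Filter.eventually_gt_atTop 0] with n hn
    exact (hbounds n hn).1
  · filter_upwards [Filter.eventually_gt_atTop 0] with n hn
    exact (hbounds n hn).2
end

section
/- (Positivity of the LP optimum for nondegenerate distortion.) Let $\mathcal{S} = \widehat{\mathcal{S}}$ with $|\mathcal{S}| \ge 2$, and suppose $P_S(s) > 0$ for all $s$, $P_{Y|X}(y|x) > 0$ for all $x,y$, and $\kappa(s,x,y,\widehat{s}) = d(s,\widehat{s})$ where $d \ge 0$ and $d(s,\widehat{s}) = 0$ iff $s = \widehat{s}$. Then the optimal value of the LP relaxation is strictly positive; in particular, no feasible point $(Q_{X|S}, Q_{\widehat{S}|Y}, W)$ of the LP has objective value $\sum_{s,x,y,\widehat{s}} d(s,\widehat{s}) P_S(s) P_{Y|X}(y|x) W(s,x,y,\widehat{s}) = 0$. -/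
open Finset

theorem lp_optimum_positive
    {S X Y : Type*} [Fintype S] [Fintype X] [Fintype Y]
    [Nonempty S] [Nonempty X] [Nonempty Y] (hS : 2 ≤ Fintype.card S)
    [DecidableEq S]
    (PS : S → ℝ) (hPSpos : ∀ s, 0 < PS s) (hPS1 : ∑ s, PS s = 1)
    (PYX : X → Y → ℝ) (hPYXpos : ∀ x y, 0 < PYX x y) (hPYX1 : ∀ x, ∑ y, PYX x y = 1)
    (d : S → S → ℝ) (hd0 : ∀ s sh, 0 ≤ d s sh) (hd : ∀ s sh, d s sh = 0 ↔ s = sh)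
    (Feas : Set ((S → X → ℝ) × (Y → S → ℝ) × (S → X → Y → S → ℝ)))
    (hFeas : Feas = {p | (∀ s x, 0 ≤ p.1 s x) ∧ (∀ y sh, 0 ≤ p.2.1 y sh) ∧
        (∀ s x y sh, 0 ≤ p.2.2 s x y sh) ∧
        (∀ s, ∑ x, p.1 s x = 1) ∧ (∀ y, ∑ sh, p.2.1 y sh = 1) ∧
        (∀ s sh y, ∑ x, p.2.2 s x y sh = p.2.1 y sh) ∧
        (∀ x s y, ∑ sh, p.2.2 s x y sh = p.1 s x) ∧
        (∀ s x y sh, p.1 s x + p.2.1 y sh - p.2.2 s x y sh ≤ 1)})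
    (obj : ((S → X → ℝ) × (Y → S → ℝ) × (S → X → Y → S → ℝ)) → ℝ)
    (hobj : ∀ p, obj p = ∑ s, ∑ x, ∑ y, ∑ sh, d s sh * PS s * PYX x y * p.2.2 s x y sh) :
    0 < sInf (obj '' Feas) ∧ ∀ p ∈ Feas, obj p ≠ 0 := by
  classical
  have hcX : (0:ℝ) < (Fintype.card X : ℝ) := by exact_mod_cast Fintype.card_pos
  have hcS : (0:ℝ) < (Fintype.card S : ℝ) := by exact_mod_cast Fintype.card_pos
  have hcS2 : (2:ℝ) ≤ (Fintype.card S : ℝ) := by exact_mod_cast hS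
  set y0 : Y := Classical.arbitrary Y with hy0
  have hnt : Nontrivial S := Fintype.one_lt_card_iff_nontrivial.mp (by omega)
  obtain ⟨a, b, hab⟩ := hnt.exists_pair_ne
  have hAne : (univ.filter (fun q : S × S => q.1 ≠ q.2)).Nonempty :=
    ⟨(a, b), by simp [hab]⟩
  set dm := (univ.filter (fun q : S × S => q.1 ≠ q.2)).inf' hAne (fun q => d q.1 q.2) with hdm
  set pm := univ.inf' univ_nonempty PS with hpm
  set qm := univ.inf' univ_nonempty (fun x => PYX x y0) with hqm
  have hdmpos : 0 < dm := by
    rw [hdm, Finset.lt_inf'_iff]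
    rintro ⟨s, sh⟩ hq
    simp only [mem_filter, mem_univ, true_and] at hq
    exact lt_of_le_of_ne (hd0 s sh) (fun h => hq ((hd s sh).mp h.symm))
  have hpmpos : 0 < pm := by
    rw [hpm, Finset.lt_inf'_iff]; intro s _; exact hPSpos s
  have hqmpos : 0 < qm := by
    rw [hqm, Finset.lt_inf'_iff]; intro x _; exact hPYXpos x y0
  set ε := dm * pm * qm with hε
  have hεpos : 0 < ε := by positivity
  -- key lower bound
  have key : ∀ p ∈ Feas, ε ≤ obj p := by
    rintro p hp
    rw [hFeas] at hp
    obtain ⟨h1, h2, h3, h4, h5, h6, h7, h8⟩ := hp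
    have hf0 : ∀ s x y sh, 0 ≤ d s sh * PS s * PYX x y * p.2.2 s x y sh := by
      intro s x y sh
      have := (hPSpos s).le
      have := (hPYXpos x y).le
      exact mul_nonneg (mul_nonneg (mul_nonneg (hd0 s sh) ‹0 ≤ PS s›) ‹0 ≤ PYX x y›) (h3 s x y sh)
    -- step A: keep only y = y0
    have stepA : ∑ s, ∑ x, ∑ sh, d s sh * PS s * PYX x y0 * p.2.2 s x y0 sh ≤ obj p := by
      rw [hobj]
      refine Finset.sum_le_sum fun s _ => Finset.sum_le_sum fun x _ => ?_
      exact Finset.single_le_sum (f := fun y => ∑ sh, d s sh * PS s * PYX x y * p.2.2 s x y sh)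
        (fun y _ => Finset.sum_nonneg fun sh _ => hf0 s x y sh) (mem_univ y0)
    -- step B: restrict sh to sh ≠ s and lower bound by ε * W
    have stepB : ∑ s, ∑ x, ∑ sh ∈ univ.erase s, ε * p.2.2 s x y0 sh ≤
        ∑ s, ∑ x, ∑ sh, d s sh * PS s * PYX x y0 * p.2.2 s x y0 sh := by
      refine Finset.sum_le_sum fun s _ => Finset.sum_le_sum fun x _ => ?_
      calc ∑ sh ∈ univ.erase s, ε * p.2.2 s x y0 sh
          ≤ ∑ sh ∈ univ.erase s, d s sh * PS s * PYX x y0 * p.2.2 s x y0 sh := by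
            refine Finset.sum_le_sum fun sh hsh => ?_
            have hne : s ≠ sh := fun h => (Finset.mem_erase.mp hsh).1 h.symm
            have hdle : dm ≤ d s sh :=
              Finset.inf'_le (fun q : S × S => d q.1 q.2)
                (by simp [hne] : (s, sh) ∈ univ.filter (fun q : S × S => q.1 ≠ q.2))
            have hple : pm ≤ PS s := Finset.inf'_le _ (mem_univ s)
            have hqle : qm ≤ PYX x y0 := Finset.inf'_le (fun x => PYX x y0) (mem_univ x)
            have hprod : ε ≤ d s sh * PS s * PYX x y0 := by
              rw [hε]
              have h1' : dm * pm ≤ d s sh * PS s :=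
                mul_le_mul hdle hple hpmpos.le ((hdmpos.trans_le hdle).le)
              exact mul_le_mul h1' hqle hqmpos.le
                (mul_nonneg ((hdmpos.trans_le hdle).le) ((hpmpos.trans_le hple).le))
            exact mul_le_mul_of_nonneg_right hprod (h3 s x y0 sh)
        _ ≤ ∑ sh, d s sh * PS s * PYX x y0 * p.2.2 s x y0 sh :=
            Finset.sum_le_sum_of_subset_of_nonneg (Finset.subset_univ _)
              (fun sh _ _ => hf0 s x y0 sh)
    -- step E: compute the total mass
    have stepE : ∑ s, ∑ x, ∑ sh ∈ univ.erase s, ε * p.2.2 s x y0 sh =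
        ε * ((Fintype.card S : ℝ) - 1) := by
      have : ∀ s : S, ∑ x, ∑ sh ∈ univ.erase s, p.2.2 s x y0 sh = 1 - p.2.1 y0 s := by
        intro s
        rw [Finset.sum_comm]
        have : ∑ sh ∈ univ.erase s, ∑ x, p.2.2 s x y0 sh
            = ∑ sh ∈ univ.erase s, p.2.1 y0 sh := by
          refine Finset.sum_congr rfl fun sh _ => h6 s sh y0
        rw [this, Finset.sum_erase_eq_sub (mem_univ s), h5 y0]
      calc ∑ s, ∑ x, ∑ sh ∈ univ.erase s, ε * p.2.2 s x y0 sh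
          = ε * ∑ s, ∑ x, ∑ sh ∈ univ.erase s, p.2.2 s x y0 sh := by
            rw [Finset.mul_sum]
            exact Finset.sum_congr rfl fun s _ => by
              rw [Finset.mul_sum]
              exact Finset.sum_congr rfl fun x _ => (Finset.mul_sum _ _ _).symm
        _ = ε * ((Fintype.card S : ℝ) - 1) := by
            rw [Finset.sum_congr rfl fun s _ => this s]
            rw [Finset.sum_sub_distrib, Finset.sum_const, h5 y0, card_univ]
            ring_nf
    have hεle : ε ≤ ε * ((Fintype.card S : ℝ) - 1) := by nlinarith
    linarith [stepA, stepB, stepE.symm.le, stepE.le]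
  -- feasible witness
  have hwit : (fun (_ : S) (_ : X) => ((Fintype.card X : ℝ))⁻¹,
      fun (_ : Y) (_ : S) => ((Fintype.card S : ℝ))⁻¹,
      fun (_ : S) (_ : X) (_ : Y) (_ : S) => ((Fintype.card X : ℝ))⁻¹ * ((Fintype.card S : ℝ))⁻¹)
      ∈ Feas := by
    rw [hFeas]
    refine ⟨fun s x => by positivity, fun y sh => by positivity,
      fun s x y sh => by positivity, ?_, ?_, ?_, ?_, ?_⟩
    · intro s
      simp [Finset.sum_const, card_univ]
    · intro y
      simp [Finset.sum_const, card_univ]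
    · intro s sh y
      simp [Finset.sum_const, card_univ]
    · intro x s y
      rw [Finset.sum_const, card_univ, nsmul_eq_mul]
      field_simp
    · intro s x y sh
      have h1' : ((Fintype.card X : ℝ))⁻¹ ≤ 1 := by
        rw [inv_le_one_iff₀]; right; exact_mod_cast Fintype.card_pos
      have h2' : ((Fintype.card S : ℝ))⁻¹ ≤ 1 := by
        rw [inv_le_one_iff₀]; right; exact_mod_cast Fintype.card_pos
      nlinarith [inv_pos.mpr hcX, inv_pos.mpr hcS,
        mul_nonneg (sub_nonneg.mpr h1') (sub_nonneg.mpr h2')]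
  have hne : (obj '' Feas).Nonempty := ⟨obj _, Set.mem_image_of_mem obj hwit⟩
  have hsinf : ε ≤ sInf (obj '' Feas) := by
    refine le_csInf hne ?_
    rintro b ⟨p, hp, rfl⟩
    exact key p hp
  refine ⟨lt_of_lt_of_le hεpos hsinf, fun p hp => ?_⟩
  exact ne_of_gt (lt_of_lt_of_le hεpos (key p hp))
end

section
/- (Lossy source coding converse with improvement term.) Let $\mathcal{S}, \widehat{\mathcal{S}}$ be finite, $P_S$ a probability distribution, $d : \mathcal{S}\times\widehat{\mathcal{S}} \to [0,\infty)$, $\mathbf{d} \ge 0$, $\lambda^* > 0$, and $j : \mathcal{S} \to \mathbb{R}$ satisfying $\sum_s P_S(s)\exp(j(s) + \lambda^*\mathbf{d} - \lambda^* d(s,\widehat{s})) \le 1$ for all $\widehat{s}$. Let $M \ge 1$ be an integer. Then for every encoder $f : \mathcal{S} \to \{1,\dots,M\}$ and decoder $g : \{1,\dots,M\} \to \widehat{\mathcal{S}}$, and every $\gamma \in \mathbb{R}$: $$\sum_s P_S(s)\,\mathbf{1}[d(s, g(f(s))) > \mathbf{d}] \ge \sum_s P_S(s)\,\mathbf{1}[j(s)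 \ge \gamma + \log M] + \frac{1}{M}\sum_s P_S(s)\exp(j(s) - \gamma)\,\mathbf{1}[j(s) < \log M + \gamma] - \exp(-\gamma).$$ -/
open Finset

theorem lossy_source_coding_converse_improved
    {S Sh : Type*} [Fintype S] [Fintype Sh]
    (PS : S → ℝ) (hPS : ∀ s, 0 ≤ PS s) (hPS1 : ∑ s, PS s = 1)
    (d : S → Sh → ℝ) (hd : ∀ s sh, 0 ≤ d s sh) (D : ℝ) (hD : 0 ≤ D)
    (lam : ℝ) (hlam : 0 < lam) (j : S → ℝ)
    (hj : ∀ sh, ∑ s, PS s * Real.exp (j s + lam * D - lam * d s sh) ≤ 1)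
    (M : ℕ) (hM : 1 ≤ M)
    (f : S → Fin M) (g : Fin M → Sh) (γ : ℝ) :
    ∑ s, PS s * (if D < d s (g (f s)) then (1:ℝ) else 0) ≥
      (∑ s, PS s * (if γ + Real.log M ≤ j s then (1:ℝ) else 0))
      + (1 / (M : ℝ)) * ∑ s, PS s * Real.exp (j s - γ) *
          (if j s < Real.log M + γ then (1:ℝ) else 0)
      - Real.exp (-γ) := by
  have hM0 : (0:ℝ) < (M:ℝ) := by exact_mod_cast Nat.lt_of_lt_of_le Nat.zero_lt_one hM
  have hexpM : Real.exp (Real.log M) = M := Real.exp_log hM0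
  set c : ℝ := Real.exp (-γ) / M with hc
  have hc0 : 0 ≤ c := div_nonneg (Real.exp_pos _).le hM0.le
  have key : ∀ s, PS s * (if γ + Real.log M ≤ j s then (1:ℝ) else 0)
      + (1/(M:ℝ)) * (PS s * Real.exp (j s - γ) * (if j s < Real.log M + γ then (1:ℝ) else 0))
      ≤ PS s * (if D < d s (g (f s)) then (1:ℝ) else 0)
        + c * (PS s * ∑ m : Fin M, Real.exp (j s + lam * D - lam * d s (g m))) := by
    intro s
    have hPSs := hPS s
    have hsum_nonneg : 0 ≤ ∑ m : Fin M, Real.exp (j s + lam * D - lam * d s (g m)) :=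
      Finset.sum_nonneg fun m _ => (Real.exp_pos _).le
    have hS : ¬ D < d s (g (f s)) →
        Real.exp (j s) ≤ ∑ m : Fin M, Real.exp (j s + lam * D - lam * d s (g m)) := by
      intro hfail
      have h1 : Real.exp (j s) ≤ Real.exp (j s + lam * D - lam * d s (g (f s))) := by
        apply Real.exp_le_exp.mpr
        have := not_lt.mp hfail
        nlinarith
      exact h1.trans (Finset.single_le_sum
        (f := fun m => Real.exp (j s + lam * D - lam * d s (g m)))
        (fun m _ => (Real.exp_pos _).le) (Finset.mem_univ (f s)))
    by_cases h : γ + Real.log M ≤ j s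
    · have h2 : ¬ j s < Real.log M + γ := not_lt.mpr (by linarith)
      simp only [if_pos h, if_neg h2, mul_zero, mul_one, add_zero]
      by_cases hfail : D < d s (g (f s))
      · simp only [if_pos hfail, mul_one]
        nlinarith [mul_nonneg hc0 (mul_nonneg hPSs hsum_nonneg)]
      · simp only [if_neg hfail, mul_zero, zero_add]
        have hS' := hS hfail
        have hEj : Real.exp γ * (M:ℝ) ≤ Real.exp (j s) := by
          calc Real.exp γ * (M:ℝ) = Real.exp (γ + Real.log M) := by
                rw [Real.exp_add, hexpM]
            _ ≤ Real.exp (j s) := Real.exp_le_exp.mpr h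
        have h3 : (1:ℝ) ≤ c * ∑ m : Fin M, Real.exp (j s + lam * D - lam * d s (g m)) := by
          have h4 : Real.exp γ * (M:ℝ) ≤ ∑ m : Fin M, Real.exp (j s + lam * D - lam * d s (g m)) :=
            hEj.trans hS'
          rw [hc]
          rw [div_mul_eq_mul_div, le_div_iff₀ hM0, one_mul]
          calc (M:ℝ) = Real.exp (-γ) * (Real.exp γ * (M:ℝ)) := by
                rw [← mul_assoc, ← Real.exp_add]; simp
            _ ≤ Real.exp (-γ) * ∑ m : Fin M, Real.exp (j s + lam * D - lam * d s (g m)) :=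
                mul_le_mul_of_nonneg_left h4 (Real.exp_pos _).le
            _ = _ := by ring
        nlinarith
    · have h2 : j s < Real.log M + γ := by push_neg at h; linarith
      simp only [if_neg h, if_pos h2, mul_zero, mul_one, zero_add]
      by_cases hfail : D < d s (g (f s))
      · simp only [if_pos hfail, mul_one]
        have hle : Real.exp (j s - γ) ≤ (M:ℝ) := by
          calc Real.exp (j s - γ) ≤ Real.exp (Real.log M) :=
                Real.exp_le_exp.mpr (by linarith)
            _ = (M:ℝ) := hexpM
        have : (1/(M:ℝ)) * (PS s * Real.exp (j s - γ)) ≤ PS s := by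
          rw [one_div, inv_mul_le_iff₀ hM0]
          nlinarith
        nlinarith [mul_nonneg hc0 (mul_nonneg hPSs hsum_nonneg)]
      · simp only [if_neg hfail, mul_zero, zero_add]
        have hS' := hS hfail
        have hEq : Real.exp (j s - γ) = Real.exp (-γ) * Real.exp (j s) := by
          rw [← Real.exp_add]; ring_nf
        rw [hEq, hc]
        have : Real.exp (-γ) * Real.exp (j s) ≤
            Real.exp (-γ) * ∑ m : Fin M, Real.exp (j s + lam * D - lam * d s (g m)) :=
          mul_le_mul_of_nonneg_left hS' (Real.exp_pos _).le
        have hPSm : 0 ≤ PS s := hPSs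
        calc (1/(M:ℝ)) * (PS s * (Real.exp (-γ) * Real.exp (j s)))
            ≤ (1/(M:ℝ)) * (PS s * (Real.exp (-γ) * ∑ m : Fin M, Real.exp (j s + lam * D - lam * d s (g m)))) := by
              apply mul_le_mul_of_nonneg_left _ (by positivity)
              exact mul_le_mul_of_nonneg_left this hPSm
          _ = Real.exp (-γ) / (M:ℝ) * (PS s * ∑ m : Fin M, Real.exp (j s + lam * D - lam * d s (g m))) := by
              ring
  rw [ge_iff_le, sub_le_iff_le_add]
  calc (∑ s, PS s * (if γ + Real.log M ≤ j s then (1:ℝ) else 0))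
      + (1 / (M : ℝ)) * ∑ s, PS s * Real.exp (j s - γ) *
          (if j s < Real.log M + γ then (1:ℝ) else 0)
      = ∑ s, (PS s * (if γ + Real.log M ≤ j s then (1:ℝ) else 0)
        + (1/(M:ℝ)) * (PS s * Real.exp (j s - γ) * (if j s < Real.log M + γ then (1:ℝ) else 0))) := by
        rw [Finset.sum_add_distrib, Finset.mul_sum]
    _ ≤ ∑ s, (PS s * (if D < d s (g (f s)) then (1:ℝ) else 0)
        + c * (PS s * ∑ m : Fin M, Real.exp (j s + lam * D - lam * d s (g m)))) :=
        Finset.sum_le_sum fun s _ => key s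
    _ = (∑ s, PS s * (if D < d s (g (f s)) then (1:ℝ) else 0))
        + c * ∑ s, PS s * ∑ m : Fin M, Real.exp (j s + lam * D - lam * d s (g m)) := by
        rw [Finset.sum_add_distrib, Finset.mul_sum]
    _ ≤ (∑ s, PS s * (if D < d s (g (f s)) then (1:ℝ) else 0)) + Real.exp (-γ) := by
        have hcomm : ∑ s, PS s * ∑ m : Fin M, Real.exp (j s + lam * D - lam * d s (g m))
            = ∑ m : Fin M, ∑ s, PS s * Real.exp (j s + lam * D - lam * d s (g m)) := by
          rw [Finset.sum_comm]
          congr 1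
          ext s
          rw [Finset.mul_sum]
        have hbound : ∑ s, PS s * ∑ m : Fin M, Real.exp (j s + lam * D - lam * d s (g m)) ≤ (M:ℝ) := by
          rw [hcomm]
          calc ∑ m : Fin M, ∑ s, PS s * Real.exp (j s + lam * D - lam * d s (g m))
              ≤ ∑ _m : Fin M, (1:ℝ) := Finset.sum_le_sum fun m _ => hj (g m)
            _ = (M:ℝ) := by simp
        have : c * (∑ s, PS s * ∑ m : Fin M, Real.exp (j s + lam * D - lam * d s (g m))) ≤ c * (M:ℝ) :=
          mul_le_mul_of_nonneg_left hbound hc0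
        have hcM : c * (M:ℝ) = Real.exp (-γ) := by
          rw [hc]; field_simp
        linarith
end

section
/- (General concave-function converse via LP duality.) Let $\mathcal{S}, \mathcal{X}, \mathcal{Y}, \widehat{\mathcal{S}}$ be finite. Suppose $P_S(s) = \bar{P}_S(\delta(s))$ for functions $\delta : \mathcal{S} \to \mathbb{R}$ and $\bar{P}_S : \mathbb{R} \to [0,1]$, and $P_{Y|X}(y|x) = \bar{P}_{Y|X}(\bar{d}(x,y))$ for $\bar{d} : \mathcal{X}\times\mathcal{Y} \to [0,1]$ and $\bar{P}_{Y|X} : [0,1] \to [0,1]$. Let $d : \mathcal{S}\times\widehat{\mathcal{S}} \to [0,1]$ be a distortion. Suppose for each $t \in \mathbb{R}$ we have a concave differentiable function $g_t : [0,1] \to \mathbb{R}$ with $g_t'(m) \le \bar{P}_S(t)\,\bar{P}_{Y|X}(m)$ for all $m \in [0,1]$. Then for every encoder $f : \mathcal{S}\to\mathcal{X}$ and decoder $h : \mathcal{Y}\to\widehat{\mathcal{S}}$: $$\sum_{s,y} P_S(s) P_{Y|X}(y|f(s))\, d(s, h(y)) \ge \sum_s \min_{x\in\mathcal{X}} \sum_y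 \big[-g_{\delta(s)}(\bar{d}(x,y)) + \bar{d}(x,y)\, g_{\delta(s)}'(\bar{d}(x,y))\big] + \sum_y \min_{\widehat{s}\in\widehat{\mathcal{S}}} \sum_s g_{\delta(s)}(d(s,\widehat{s})).$$ -/
open Finset

lemma concave_grad_ineq {f : ℝ → ℝ} {f' a b : ℝ}
    (hf : ConcaveOn ℝ (Set.Icc (0:ℝ) 1) f)
    (ha : a ∈ Set.Icc (0:ℝ) 1) (hb : b ∈ Set.Icc (0:ℝ) 1)
    (hd : HasDerivAt f f' b) :
    f a - f b ≤ f' * (a - b) := by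
  rcases lt_trichotomy a b with hab | rfl | hab
  · have h1 := hf.le_slope_of_hasDerivAt ha hb hab hd
    rw [slope_def_field, le_div_iff₀ (by linarith)] at h1
    nlinarith
  · simp
  · have h1 := hf.slope_le_of_hasDerivAt hb ha hab hd
    rw [slope_def_field, div_le_iff₀ (by linarith)] at h1
    nlinarith

theorem general_concave_converse
    {S X Y Sh : Type*} [Fintype S] [Fintype X] [Fintype Y] [Fintype Sh]
    [Nonempty X] [Nonempty Sh]
    (δ : S → ℝ) (PbarS : ℝ → ℝ) (hPbarS : ∀ t, PbarS t ∈ Set.Icc (0:ℝ) 1)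
    (PS : S → ℝ) (hPS : ∀ s, PS s = PbarS (δ s)) (hPS1 : ∑ s, PS s = 1)
    (dbar : X → Y → ℝ) (hdbar : ∀ x y, dbar x y ∈ Set.Icc (0:ℝ) 1)
    (PbarYX : ℝ → ℝ) (hPbarYX : ∀ m, PbarYX m ∈ Set.Icc (0:ℝ) 1)
    (PYX : X → Y → ℝ) (hPYX : ∀ x y, PYX x y = PbarYX (dbar x y))
    (hPYX1 : ∀ x, ∑ y, PYX x y = 1)
    (d : S → Sh → ℝ) (hd : ∀ s sh, d s sh ∈ Set.Icc (0:ℝ) 1)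
    (g : ℝ → ℝ → ℝ) (g' : ℝ → ℝ → ℝ)
    (hconc : ∀ t, ConcaveOn ℝ (Set.Icc (0:ℝ) 1) (g t))
    (hderiv : ∀ t, ∀ m ∈ Set.Icc (0:ℝ) 1, HasDerivAt (g t) (g' t m) m)
    (hgrad : ∀ t, ∀ m ∈ Set.Icc (0:ℝ) 1, g' t m ≤ PbarS t * PbarYX m)
    (f : S → X) (h : Y → Sh) :
    ∑ s, ∑ y, PS s * PYX (f s) y * d s (h y) ≥
      (∑ s, (Finset.univ : Finset X).inf' Finset.univ_nonempty fun x =>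
          ∑ y, (-(g (δ s) (dbar x y)) + dbar x y * g' (δ s) (dbar x y)))
      + ∑ _y : Y, (Finset.univ : Finset Sh).inf' Finset.univ_nonempty fun sh =>
          ∑ s, g (δ s) (d s sh) := by
  have key : ∀ s y,
      g (δ s) (d s (h y)) + (-(g (δ s) (dbar (f s) y)) + dbar (f s) y * g' (δ s) (dbar (f s) y))
        ≤ PS s * PYX (f s) y * d s (h y) := by
    intro s y
    set a := d s (h y)
    set b := dbar (f s) y
    have hb := hdbar (f s) y
    have ha := hd s (h y)
    have h1 := concave_grad_ineq (hconc (δ s)) ha hb (hderiv (δ s) b hb)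
    have h2 : g' (δ s) b ≤ PS s * PYX (f s) y := by
      rw [hPS, hPYX]; exact hgrad (δ s) b hb
    have h3 : g' (δ s) b * a ≤ PS s * PYX (f s) y * a :=
      mul_le_mul_of_nonneg_right h2 ha.1
    nlinarith
  have step1 : (∑ s, (Finset.univ : Finset X).inf' Finset.univ_nonempty fun x =>
          ∑ y, (-(g (δ s) (dbar x y)) + dbar x y * g' (δ s) (dbar x y)))
      ≤ ∑ s, ∑ y, (-(g (δ s) (dbar (f s) y)) + dbar (f s) y * g' (δ s) (dbar (f s) y)) := by
    refine Finset.sum_le_sum fun s _ => ?_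
    exact Finset.inf'_le _ (Finset.mem_univ (f s))
  have step2 : (∑ _y : Y, (Finset.univ : Finset Sh).inf' Finset.univ_nonempty fun sh =>
          ∑ s, g (δ s) (d s sh))
      ≤ ∑ y, ∑ s, g (δ s) (d s (h y)) := by
    refine Finset.sum_le_sum fun y _ => ?_
    exact Finset.inf'_le _ (Finset.mem_univ (h y))
  have step3 : (∑ s, ∑ y, (-(g (δ s) (dbar (f s) y)) + dbar (f s) y * g' (δ s) (dbar (f s) y)))
      + ∑ y, ∑ s, g (δ s) (d s (h y)) ≤ ∑ s, ∑ y, PS s * PYX (f s) y * d s (h y) := by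
    rw [show (∑ y, ∑ s, g (δ s) (d s (h y))) = ∑ s, ∑ y, g (δ s) (d s (h y)) from
      Finset.sum_comm, ← Finset.sum_add_distrib]
    refine Finset.sum_le_sum fun s _ => ?_
    rw [← Finset.sum_add_distrib]
    refine Finset.sum_le_sum fun y _ => ?_
    have := key s y
    linarith
  linarith
end

section
/- (Tightness for the $q$-ary uniform source over the $q$-ary symmetric channel.) Let $q \ge 2$, $n \ge 1$, and $0 < \epsilon < 1 - 1/q$. Let $\mathcal{S} = \mathcal{X} = \mathcal{Y} = \widehat{\mathcal{S}} = \mathbb{F}_q^n$ (strings of length $n$ over a $q$-element alphabet), $P_S(s) = q^{-n}$, and let the channel be memoryless $q$-ary symmetric: $P_{Y|X}(y|x) = \prod_{i=1}^n [\frac{\epsilon}{q-1}\mathbf{1}(y_i \ne x_i) + (1-\epsilon)\mathbf{1}(y_i = x_i)]$. Let the loss be the average symbol-wise Hamming distortion $\kappa(s,\widehat{s}) = \frac{1}{n}\sum_{i=1}^n \mathbf{1}[s_i \ne \widehat{s}_i]$. Then the minimum over all encoder/decoder pairs $(f,g)$ of the expected distortion $\sum_{s,y} q^{-n} P_{Y|X}(y|f(s))\,\kappa(s,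 g(y))$ equals $\epsilon$, and it is achieved by uncoded transmission $f = g = \mathrm{id}$. -/
open Finset

/-- Gibbs' inequality / nonnegativity of KL divergence, finite case. -/
private lemma kl_ineq {α : Type*} [Fintype α] (p r : α → ℝ)
    (hp : ∀ a, 0 ≤ p a) (hr : ∀ a, 0 < r a)
    (hps : ∑ a, p a = 1) (hrs : ∑ a, r a = 1) :
    ∑ a, p a * Real.log (r a) ≤ ∑ a, p a * Real.log (p a) := by
  have key : ∀ a : α, p a * Real.log (r a) - p a * Real.log (p a) ≤ r a - p a := by
    intro a
    rcases eq_or_lt_of_le (hp a) with h | h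
    · rw [← h]; simp; linarith [hr a]
    · have hrp : 0 < r a / p a := div_pos (hr a) h
      have h1 := Real.log_le_sub_one_of_pos hrp
      have h2 : Real.log (r a / p a) = Real.log (r a) - Real.log (p a) :=
        Real.log_div (ne_of_gt (hr a)) (ne_of_gt h)
      rw [h2] at h1
      have h3 := mul_le_mul_of_nonneg_left h1 (le_of_lt h)
      have h4 : p a * (r a / p a - 1) = r a - p a := by field_simp
      nlinarith
  have hsum : ∑ a, (p a * Real.log (r a) - p a * Real.log (p a)) ≤ ∑ a, (r a - p a) :=
    Finset.sum_le_sum fun a _ => key a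
  rw [Finset.sum_sub_distrib, Finset.sum_sub_distrib, hps, hrs] at hsum
  linarith

/-- Sum over functions of a product equals product of sums. -/
private lemma sum_prod_eval {n q : ℕ} (v : Fin n → Fin q → ℝ) :
    ∑ y : Fin n → Fin q, ∏ i, v i (y i) = ∏ i, ∑ b, v i b :=
  (Fintype.prod_sum v).symm

/-- Marginalization: summing a product kernel against a function of one coordinate. -/
private lemma sum_prod_mul {n q : ℕ} (W : Fin q → Fin q → ℝ)
    (hW : ∀ a, ∑ b, W a b = 1) (x : Fin n → Fin q) (i : Fin n) (φ : Fin q → ℝ) :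
    ∑ y : Fin n → Fin q, (∏ j, W (x j) (y j)) * φ (y i) = ∑ b, W (x i) b * φ b := by
  have h1 : ∀ y : Fin n → Fin q,
      (∏ j, W (x j) (y j)) * φ (y i)
        = ∏ j, (W (x j) (y j) * if i = j then φ (y j) else 1) := by
    intro y
    rw [Finset.prod_mul_distrib, Finset.prod_ite_eq univ i (fun j => φ (y j)),
      if_pos (mem_univ i)]
  rw [Finset.sum_congr rfl fun y _ => h1 y,
    sum_prod_eval (fun j b => W (x j) b * if i = j then φ b else 1)]
  have h2 : ∀ j ∈ (univ : Finset (Fin n)), j ≠ i →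
      (∑ b, (W (x j) b * if i = j then φ b else 1)) = 1 := by
    intro j _ hj
    have : ∀ b, (W (x j) b * if i = j then φ b else 1) = W (x j) b := by
      intro b; rw [if_neg (Ne.symm hj), mul_one]
    rw [Finset.sum_congr rfl fun b _ => this b, hW]
  rw [Finset.prod_eq_single_of_mem i (mem_univ i) h2]
  simp

/-- Summing an `if b ≠ a` over `Fin q`. -/
private lemma sum_ite_ne' {q : ℕ} (hq : 1 ≤ q) (a : Fin q) (c d : ℝ) :
    ∑ b : Fin q, (if b ≠ a then c else d) = ((q:ℝ) - 1) * c + d := by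
  have h1 : ∀ b : Fin q, (if b ≠ a then c else d) = c + (if b = a then d - c else 0) := by
    intro b
    by_cases h : b = a
    · simp [h]
    · simp [h]
  rw [Finset.sum_congr rfl fun b _ => h1 b, Finset.sum_add_distrib,
    Finset.sum_ite_eq' univ a (fun _ => d - c), if_pos (mem_univ a),
    Finset.sum_const, Finset.card_univ]
  simp only [Fintype.card_fin, nsmul_eq_mul]
  ring

theorem qary_uniform_symmetric_tightness
    (q n : ℕ) (hq : 2 ≤ q) (hn : 1 ≤ n)
    (ε : ℝ) (hε0 : 0 < ε) (hε : ε < 1 - 1/(q:ℝ))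
    (PYX : (Fin n → Fin q) → (Fin n → Fin q) → ℝ)
    (hPYX : ∀ x y, PYX x y =
      ∏ i : Fin n, (if y i ≠ x i then ε / ((q:ℝ) - 1) else 1 - ε))
    (κ : (Fin n → Fin q) → (Fin n → Fin q) → ℝ)
    (hκ : ∀ s sh, κ s sh =
      (1 / (n:ℝ)) * ∑ i : Fin n, (if s i ≠ sh i then (1:ℝ) else 0))
    (obj : ((Fin n → Fin q) → (Fin n → Fin q)) →
           ((Fin n → Fin q) → (Fin n → Fin q)) → ℝ)
    (hobj : ∀ f g, obj f g =
      ∑ s : Fin n → Fin q, ∑ y : Fin n → Fin q,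
        ((q:ℝ) ^ n)⁻¹ * PYX (f s) y * κ s (g y)) :
    IsLeast { v : ℝ | ∃ f g, v = obj f g } ε ∧ obj id id = ε := by
  -- basic numeric facts
  have hq2 : (2:ℝ) ≤ (q:ℝ) := by exact_mod_cast hq
  have hq0 : (0:ℝ) < (q:ℝ) - 1 := by linarith
  have hq0' : ((q:ℝ) - 1) ≠ 0 := ne_of_gt hq0
  have hqpos : (0:ℝ) < (q:ℝ) := by linarith
  have hε1 : ε < 1 := by
    have : 0 < 1/(q:ℝ) := by positivity
    linarith
  have h1ε : 0 < 1 - ε := by linarith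
  have hεq : 0 < ε / ((q:ℝ) - 1) := div_pos hε0 hq0
  have hkey : ε / ((q:ℝ) - 1) < 1 - ε := by
    rw [div_lt_iff₀ hq0]
    have h1 : ε * (q:ℝ) < (1 - 1/(q:ℝ)) * (q:ℝ) := mul_lt_mul_of_pos_right hε hqpos
    have h2 : (1 - 1/(q:ℝ)) * (q:ℝ) = (q:ℝ) - 1 := by field_simp
    nlinarith
  have hnR : (0:ℝ) < (n:ℝ) := by exact_mod_cast Nat.lt_of_lt_of_le Nat.zero_lt_one hn
  have hn0 : (n:ℝ) ≠ 0 := ne_of_gt hnR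
  have hqn_pos : (0:ℝ) < ((q:ℝ))^n := by positivity
  set L1 : ℝ := Real.log (1 - ε) with hL1def
  set L2 : ℝ := Real.log (ε / ((q:ℝ) - 1)) with hL2def
  have hL : L2 < L1 := Real.log_lt_log hεq hkey
  set C0 : ℝ := Real.log (((q:ℝ)^n)⁻¹) with hC0def
  set W : Fin q → Fin q → ℝ :=
    fun a b => if b ≠ a then ε / ((q:ℝ) - 1) else 1 - ε with hWdef
  have hWpos : ∀ a b, 0 < W a b := by
    intro a b
    by_cases h : b = a <;> simp [hWdef, h, hεq, h1ε]
  have hW1 : ∀ a, ∑ b, W a b = 1 := by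
    intro a
    simp only [hWdef]
    rw [sum_ite_ne' (by omega) a (ε / ((q:ℝ)-1)) (1-ε)]
    field_simp
    ring
  have hPW : ∀ x y, PYX x y = ∏ i, W (x i) (y i) := by
    intro x y
    rw [hPYX]
  have hPpos : ∀ x y, 0 < PYX x y := by
    intro x y
    rw [hPW]
    exact Finset.prod_pos fun i _ => hWpos _ _
  have hPsum : ∀ x, ∑ y, PYX x y = 1 := by
    intro x
    simp_rw [hPW]
    rw [sum_prod_eval (fun i b => W (x i) b)]
    exact Finset.prod_eq_one fun i _ => hW1 (x i)
  have hcard : ∑ _s : Fin n → Fin q, (((q:ℝ))^n)⁻¹ = 1 := by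
    rw [Finset.sum_const, Finset.card_univ]
    have hc : Fintype.card (Fin n → Fin q) = q ^ n := by
      simp [Fintype.card_fun]
    rw [hc, nsmul_eq_mul]
    push_cast
    field_simp
  have hconstmul : ∀ c : ℝ, (∑ _s : Fin n → Fin q, (((q:ℝ))^n)⁻¹ * c) = c := by
    intro c
    rw [← Finset.sum_mul, hcard, one_mul]
  -- per-coordinate error probability of the identity scheme
  have hεind : ∀ (x : Fin n → Fin q) (i : Fin n),
      ∑ y, PYX x y * (if x i ≠ y i then (1:ℝ) else 0) = ε := by
    intro x i
    simp_rw [hPW]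
    have h := sum_prod_mul W hW1 x i (fun b => if x i ≠ b then (1:ℝ) else 0)
    rw [h]
    have h1 : ∀ b, W (x i) b * (if x i ≠ b then (1:ℝ) else 0)
        = if b ≠ x i then ε/((q:ℝ)-1) else 0 := by
      intro b
      by_cases hb : b = x i
      · simp [hWdef, hb]
      · simp [hWdef, hb, Ne.symm hb]
    rw [Finset.sum_congr rfl fun b _ => h1 b, sum_ite_ne' (by omega) (x i) _ 0]
    field_simp
    ring
  have hWlog : ∀ a : Fin q, ∑ b, W a b * Real.log (W a b) = ε*L2 + (1-ε)*L1 := by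
    intro a
    have h1 : ∀ b, W a b * Real.log (W a b)
        = if b ≠ a then (ε/((q:ℝ)-1)) * L2 else (1-ε) * L1 := by
      intro b
      by_cases hb : b = a
      · have hba : ¬ (b ≠ a) := fun hne => hne hb
        simp only [hWdef, if_neg hba, hL1def]
      · simp only [hWdef, if_pos hb, hL2def]
    rw [Finset.sum_congr rfl fun b _ => h1 b, sum_ite_ne' (by omega) a _ _]
    have h2 : ((q:ℝ)-1) * (ε/((q:ℝ)-1) * L2) = ε * L2 := by
      field_simp
    linarith
  have hlogW2 : ∀ a b : Fin q,
      Real.log (W a b) = L1 + (L2 - L1) * (if b ≠ a then (1:ℝ) else 0) := by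
    intro a b
    by_cases hb : b = a
    · have hba : ¬ (b ≠ a) := fun hne => hne hb
      simp only [hWdef, if_neg hba, mul_zero, add_zero, hL1def]
    · simp only [hWdef, if_pos hb, mul_one, hL1def, hL2def]
      ring
  -- rewriting n * obj f g
  have hobj' : ∀ f g : (Fin n → Fin q) → (Fin n → Fin q),
      (n:ℝ) * obj f g
        = ∑ s : Fin n → Fin q, ∑ y : Fin n → Fin q, ∑ i : Fin n,
            ((q:ℝ) ^ n)⁻¹ * PYX (f s) y * (if s i ≠ g y i then (1:ℝ) else 0) := by
    intro f g
    rw [hobj, Finset.mul_sum]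
    refine Finset.sum_congr rfl fun s _ => ?_
    rw [Finset.mul_sum]
    refine Finset.sum_congr rfl fun y _ => ?_
    rw [hκ]
    have h3 : (n:ℝ) * (((q:ℝ)^n)⁻¹ * PYX (f s) y
          * ((1/(n:ℝ)) * ∑ i, (if s i ≠ g y i then (1:ℝ) else 0)))
        = ((q:ℝ)^n)⁻¹ * PYX (f s) y * ∑ i, (if s i ≠ g y i then (1:ℝ) else 0) := by
      field_simp
    rw [h3, Finset.mul_sum]
  have hswap : ∀ F : Fin n → (Fin n → Fin q) → (Fin n → Fin q) → ℝ,
      (∑ s : Fin n → Fin q, ∑ y : Fin n → Fin q, ∑ i : Fin n, F i s y)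
        = ∑ i : Fin n, ∑ s : Fin n → Fin q, ∑ y : Fin n → Fin q, F i s y := by
    intro F
    have h1 : (∑ s : Fin n → Fin q, ∑ y : Fin n → Fin q, ∑ i : Fin n, F i s y)
        = ∑ s : Fin n → Fin q, ∑ i : Fin n, ∑ y : Fin n → Fin q, F i s y :=
      Finset.sum_congr rfl fun s _ => Finset.sum_comm
    rw [h1]
    exact Finset.sum_comm
  -- Part A : obj id id = ε
  have hobj_id : obj id id = ε := by
    have h1 := hobj' id id
    rw [hswap] at h1
    have h2 : ∀ i : Fin n, (∑ s : Fin n → Fin q, ∑ y : Fin n → Fin q,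
        ((q:ℝ) ^ n)⁻¹ * PYX (id s) y * (if s i ≠ id y i then (1:ℝ) else 0)) = ε := by
      intro i
      have h3 : ∀ s : Fin n → Fin q, (∑ y : Fin n → Fin q,
          ((q:ℝ) ^ n)⁻¹ * PYX s y * (if s i ≠ y i then (1:ℝ) else 0))
          = ((q:ℝ) ^ n)⁻¹ * ε := by
        intro s
        rw [← hεind s i, Finset.mul_sum]
        exact Finset.sum_congr rfl fun y _ => by ring
      simp only [id]
      rw [Finset.sum_congr rfl fun s _ => h3 s, hconstmul]
    rw [Finset.sum_congr rfl fun i _ => h2 i, Finset.sum_const, Finset.card_univ,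
      Fintype.card_fin, nsmul_eq_mul] at h1
    exact mul_left_cancel₀ hn0 h1
  -- Part B : lower bound via Gibbs' inequality
  have hlb : ∀ f g : (Fin n → Fin q) → (Fin n → Fin q), ε ≤ obj f g := by
    intro f g
    set p : ((Fin n → Fin q) × (Fin n → Fin q)) → ℝ :=
      fun sy => ((q:ℝ) ^ n)⁻¹ * PYX (f sy.1) sy.2 with hpdef
    set r : ((Fin n → Fin q) × (Fin n → Fin q)) → ℝ :=
      fun sy => ((q:ℝ) ^ n)⁻¹ * PYX (g sy.2) sy.1 with hrdef
    have hp : ∀ a, 0 ≤ p a := fun a =>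
      le_of_lt (mul_pos (inv_pos.2 hqn_pos) (hPpos _ _))
    have hr : ∀ a, 0 < r a := fun a => mul_pos (inv_pos.2 hqn_pos) (hPpos _ _)
    have hmarg : ∀ s : Fin n → Fin q,
        (∑ y : Fin n → Fin q, p (s, y)) = ((q:ℝ) ^ n)⁻¹ := by
      intro s
      simp only [hpdef]
      rw [← Finset.mul_sum, hPsum, mul_one]
    have hps : ∑ a, p a = 1 := by
      rw [Fintype.sum_prod_type]
      rw [Finset.sum_congr rfl fun s _ => hmarg s, hcard]
    have hrs : ∑ a, r a = 1 := by
      rw [Fintype.sum_prod_type, Finset.sum_comm]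
      have h5 : ∀ y : Fin n → Fin q,
          (∑ s : Fin n → Fin q, r (s, y)) = ((q:ℝ) ^ n)⁻¹ := by
        intro y
        simp only [hrdef]
        rw [← Finset.mul_sum, hPsum, mul_one]
      rw [Finset.sum_congr rfl fun y _ => h5 y, hcard]
    have hKL := kl_ineq p r hp hr hps hrs
    -- compute ∑ p log p
    have Hp : ∑ a, p a * Real.log (p a) = C0 + (n:ℝ) * (ε*L2 + (1-ε)*L1) := by
      rw [Fintype.sum_prod_type]
      have hterm : ∀ (s y : Fin n → Fin q),
          p (s, y) * Real.log (p (s, y))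
            = p (s, y) * C0
              + ∑ i, ((q:ℝ) ^ n)⁻¹ * (PYX (f s) y * Real.log (W (f s i) (y i))) := by
        intro s y
        have hlog : Real.log (p (s, y))
            = C0 + ∑ i, Real.log (W (f s i) (y i)) := by
          simp only [hpdef]
          rw [Real.log_mul (inv_ne_zero (ne_of_gt hqn_pos)) (ne_of_gt (hPpos _ _)),
            hC0def, hPW, Real.log_prod (fun i _ => ne_of_gt (hWpos _ _))]
        rw [hlog, mul_add, Finset.mul_sum]
        congr 1
        refine Finset.sum_congr rfl fun i _ => ?_
        simp only [hpdef]
        ring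
      have hsy : ∀ s : Fin n → Fin q,
          (∑ y : Fin n → Fin q, p (s, y) * Real.log (p (s, y)))
            = ((q:ℝ) ^ n)⁻¹ * C0 + ((q:ℝ) ^ n)⁻¹ * ((n:ℝ) * (ε*L2 + (1-ε)*L1)) := by
        intro s
        rw [Finset.sum_congr rfl fun y _ => hterm s y, Finset.sum_add_distrib]
        congr 1
        · rw [← Finset.sum_mul, hmarg s]
        · rw [Finset.sum_comm]
          have hin : ∀ i : Fin n,
              (∑ y : Fin n → Fin q,
                ((q:ℝ) ^ n)⁻¹ * (PYX (f s) y * Real.log (W (f s i) (y i))))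
              = ((q:ℝ) ^ n)⁻¹ * (ε*L2 + (1-ε)*L1) := by
            intro i
            rw [← Finset.mul_sum]
            congr 1
            have h6 := sum_prod_mul W hW1 (f s) i (fun b => Real.log (W (f s i) b))
            simp only [hPW]
            rw [h6, hWlog]
          rw [Finset.sum_congr rfl fun i _ => hin i, Finset.sum_const,
            Finset.card_univ, Fintype.card_fin, nsmul_eq_mul]
          ring
      rw [Finset.sum_congr rfl fun s _ => hsy s, Finset.sum_add_distrib,
        hconstmul, hconstmul]
    -- compute ∑ p log r
    have Hr : ∑ a, p a * Real.log (r a)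
        = C0 + (n:ℝ) * L1 + (L2 - L1) * ((n:ℝ) * obj f g) := by
      rw [Fintype.sum_prod_type]
      have hterm : ∀ (s y : Fin n → Fin q),
          p (s, y) * Real.log (r (s, y))
            = p (s, y) * (C0 + (n:ℝ) * L1)
              + (L2 - L1) * ∑ i, (((q:ℝ) ^ n)⁻¹ * PYX (f s) y
                  * (if s i ≠ g y i then (1:ℝ) else 0)) := by
        intro s y
        have hlog : Real.log (r (s, y))
            = C0 + ∑ i, (L1 + (L2 - L1) * (if s i ≠ g y i then (1:ℝ) else 0)) := by
          simp only [hrdef]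
          rw [Real.log_mul (inv_ne_zero (ne_of_gt hqn_pos)) (ne_of_gt (hPpos _ _)),
            hC0def, hPW, Real.log_prod (fun i _ => ne_of_gt (hWpos _ _))]
          congr 1
          exact Finset.sum_congr rfl fun i _ => hlogW2 (g y i) (s i)
        rw [hlog]
        have h7 : ∀ i : Fin n,
            p (s, y) * (L1 + (L2 - L1) * (if s i ≠ g y i then (1:ℝ) else 0))
              = p (s, y) * L1 + (L2 - L1) * (((q:ℝ) ^ n)⁻¹ * PYX (f s) y
                  * (if s i ≠ g y i then (1:ℝ) else 0)) := by
          intro i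
          simp only [hpdef]
          ring
        rw [mul_add, Finset.mul_sum, Finset.sum_congr rfl fun i _ => h7 i,
          Finset.sum_add_distrib, Finset.sum_const, Finset.card_univ,
          Fintype.card_fin, nsmul_eq_mul, ← Finset.mul_sum]
        ring
      rw [Finset.sum_congr rfl fun s _ =>
        (Finset.sum_congr rfl fun y _ => hterm s y)]
      have h8 : ∀ s : Fin n → Fin q,
          (∑ y : Fin n → Fin q, (p (s, y) * (C0 + (n:ℝ) * L1)
            + (L2 - L1) * ∑ i, (((q:ℝ) ^ n)⁻¹ * PYX (f s) y
                * (if s i ≠ g y i then (1:ℝ) else 0))))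
          = ((q:ℝ) ^ n)⁻¹ * (C0 + (n:ℝ) * L1)
            + (L2 - L1) * ∑ y : Fin n → Fin q, ∑ i : Fin n,
                (((q:ℝ) ^ n)⁻¹ * PYX (f s) y
                    * (if s i ≠ g y i then (1:ℝ) else 0)) := by
        intro s
        rw [Finset.sum_add_distrib, ← Finset.sum_mul, hmarg s, ← Finset.mul_sum]
      rw [Finset.sum_congr rfl fun s _ => h8 s, Finset.sum_add_distrib,
        hconstmul, ← Finset.mul_sum, ← hobj' f g]
    rw [Hp, Hr] at hKL
    -- conclude
    have h9 : (n:ℝ) * (ε*L2 + (1-ε)*L1) - (n:ℝ) * L1 = (L2 - L1) * ((n:ℝ) * ε) := by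
      ring
    have h10 : (L2 - L1) * ((n:ℝ) * obj f g) ≤ (L2 - L1) * ((n:ℝ) * ε) := by
      linarith
    have hneg : L2 - L1 < 0 := by linarith
    have h11 : (n:ℝ) * ε ≤ (n:ℝ) * obj f g := (mul_le_mul_left_of_neg hneg).mp h10
    exact le_of_mul_le_mul_left h11 hnR
  refine ⟨⟨⟨id, id, hobj_id.symm⟩, ?_⟩, hobj_id⟩
  rintro v ⟨f, g, hv⟩
  rw [hv]
  exact hlb f g
end
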